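/- Let K ⊆ ℕ^s be a representative set (containing exactly one element of D(h⃗) for each h⃗ ∈ ℤ_p^m) and let F : {0,…,p^m−1} → ℂ. Then for all k, l ∈ K, Σ_{n=0}^{p^m−1} Σ_{v=0}^{p^m−1} F(n ⊖ v) wal_k(x_n) conj(wal_l(x_v)) = p^{2m} · F̃(k) if k = l and = 0 otherwise, where n ⊖ v denotes digitwise subtraction of the base-p digits of n and v modulo p, and F̃(k) = p^{−m} Σ_{n=0}^{p^m−1} F(n) wal_k(x_n). -/

import Mathlib

open scoped BigOperators

/-- `ω_p = exp(2πi/p)`. -/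
noncomputable def omega (p : ℕ) : ℂ := Complex.exp (2 * Real.pi * Complex.I / p)

/-- The `i`-th base-`p` digit of the natural number `n` (starting from `i = 0`). -/
def ndigit (p n i : ℕ) : ℕ := (n / p ^ i) % p

/-- The `i`-th base-`p` digit of the real number `x` (starting from `i = 1`):
`x_i = ⌊p^i x⌋ mod p`. -/
noncomputable def xdigit (p : ℕ) (x : ℝ) (i : ℕ) : ℕ := (⌊(p : ℝ) ^ i * x⌋).toNat % p

/-- The base-`p` Walsh function `wal_k(x) = ω_p^{x_1 k_0 + x_2 k_1 + ⋯}`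
(the digits of `k` vanish beyond index `k`, so the sum below is the full series). -/
noncomputable def wal (p k : ℕ) (x : ℝ) : ℂ :=
  omega p ^ (∑ i ∈ Finset.range (k + 1), xdigit p x (i + 1) * ndigit p k i)

/-- Multivariate Walsh function `wal_k(x) = ∏_j wal_{k_j}(x_j)`. -/
noncomputable def walS (p s : ℕ) (k : Fin s → ℕ) (x : Fin s → ℝ) : ℂ :=
  ∏ j, wal p (k j) (x j)

/-- The vector of the first `m` base-`p` digits of `n`, viewed in `ℤ_p^m`. -/
def nvec (p m : ℕ) (n : ℕ) : Fin m → ZMod p := fun i => (ndigit p n i : ZMod p)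

/-- The `n`-th point of the digital net generated by matrices `C = (C_1,…,C_s)`:
`x_{j,n} = Σ_{i=1}^m y_{j,n,i} p^{-i}` where `y⃗_{j,n} = C_j n⃗`. -/
noncomputable def netPoint (p s m : ℕ) (C : Fin s → Matrix (Fin m) (Fin m) (ZMod p)) (n : ℕ) :
    Fin s → ℝ :=
  fun j => ∑ i : Fin m, ((Matrix.mulVec (C j) (nvec p m n)) i).val / (p : ℝ) ^ (i.val + 1)

/-- `C·k = C_1ᵀ k⃗_1^{(m)} + ⋯ + C_sᵀ k⃗_s^{(m)} ∈ ℤ_p^m`. -/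
def Cdot (p s m : ℕ) (C : Fin s → Matrix (Fin m) (Fin m) (ZMod p)) (k : Fin s → ℕ) :
    Fin m → ZMod p :=
  ∑ j, Matrix.mulVec (Matrix.transpose (C j)) (nvec p m (k j))

/-- Digitwise addition modulo `p` of base-`p` digits: `k ⊕ l`. -/
def dadd (p k l : ℕ) : ℕ :=
  ∑ i ∈ Finset.range (k + l + 1), ((ndigit p k i + ndigit p l i) % p) * p ^ i

/-- Digitwise subtraction modulo `p` of base-`p` digits: `k ⊖ l`. -/
def dsub (p k l : ℕ) : ℕ :=
  ∑ i ∈ Finset.range (k + l + 1), ((ndigit p k i + (p - ndigit p l i)) % p) * p ^ i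

open Finset



lemma ndigit_lt {p : ℕ} (hp : 2 ≤ p) (n i : ℕ) : ndigit p n i < p := by
  unfold ndigit; exact Nat.mod_lt _ (by omega)

lemma ndigit_eq_zero_of_lt {p n i : ℕ} (h : n < p ^ i) : ndigit p n i = 0 := by
  simp [ndigit, Nat.div_eq_of_lt h]

lemma sum_digits_lt {p : ℕ} (hp : 2 ≤ p) {M : ℕ} {c : ℕ → ℕ} (hc : ∀ i < M, c i < p) :
    ∑ i ∈ range M, c i * p ^ i < p ^ M := by
  induction M with
  | zero => simp
  | succ M ih =>
    rw [Finset.sum_range_succ, pow_succ]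
    have h1 : ∑ i ∈ range M, c i * p ^ i < p ^ M := ih (fun i hi => hc i (by omega))
    have h2 : c M < p := hc M (by omega)
    nlinarith [pow_pos (show 0 < p by omega) M]

lemma digit_of_sum {p : ℕ} (hp : 2 ≤ p) {M d : ℕ} (hd : d < M) {c : ℕ → ℕ}
    (hc : ∀ i < M, c i < p) :
    ndigit p (∑ i ∈ range M, c i * p ^ i) d = c d := by
  have hsplit : ∑ i ∈ range M, c i * p ^ i
      = (∑ i ∈ range d, c i * p ^ i)
        + p ^ d * (c d + p * ∑ t ∈ range (M - d - 1), c (d + 1 + t) * p ^ t) := by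
    rw [range_eq_Ico, ← Finset.sum_Ico_consecutive _ (Nat.zero_le d) (le_of_lt hd),
      ← range_eq_Ico]
    congr 1
    rw [Finset.sum_Ico_eq_sum_range]
    have hMd : M - d = (M - d - 1) + 1 := by omega
    rw [hMd, Finset.sum_range_succ']
    simp only [add_zero]
    have he : ∀ t, c (d + (t + 1)) * p ^ (d + (t + 1)) = p ^ d * (p * (c (d + 1 + t) * p ^ t)) := by
      intro t
      have h1 : d + (t + 1) = d + 1 + t := by omega
      rw [h1, pow_add, pow_add, pow_one]
      ring
    rw [Finset.sum_congr rfl (fun t _ => he t), ← Finset.mul_sum, ← Finset.mul_sum]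
    simp only [Nat.add_sub_cancel]
    ring
  have hA : ∑ i ∈ range d, c i * p ^ i < p ^ d :=
    sum_digits_lt hp (fun i hi => hc i (by omega))
  rw [hsplit]
  unfold ndigit
  rw [Nat.add_mul_div_left _ _ (pow_pos (by omega) d), Nat.div_eq_of_lt hA, zero_add,
    Nat.add_mul_mod_self_left, Nat.mod_eq_of_lt (hc d hd)]

lemma sum_digits_mod (p : ℕ) : ∀ (M n : ℕ), ∑ i ∈ range M, ndigit p n i * p ^ i = n % p ^ M := by
  intro M
  induction M with
  | zero => intro n; simp [Nat.mod_one]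
  | succ M ih =>
    intro n
    rw [Finset.sum_range_succ, ih, pow_succ, Nat.mod_mul]
    unfold ndigit
    ring

lemma digits_reconstruct {p M n : ℕ} (hn : n < p ^ M) :
    ∑ i ∈ range M, ndigit p n i * p ^ i = n := by
  rw [sum_digits_mod, Nat.mod_eq_of_lt hn]

lemma eq_of_digits {p M n v : ℕ} (hn : n < p ^ M) (hv : v < p ^ M)
    (h : ∀ i < M, ndigit p n i = ndigit p v i) : n = v := by
  rw [← digits_reconstruct hn, ← digits_reconstruct hv]
  exact Finset.sum_congr rfl (fun i hi => by rw [h i (Finset.mem_range.mp hi)])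


lemma lt_pow_self' {p : ℕ} (hp : 2 ≤ p) {k i : ℕ} (h : k ≤ i) : k < p ^ i :=
  lt_of_lt_of_le (Nat.lt_two_pow_self (n := k))
    (le_trans (Nat.pow_le_pow_left hp k) (Nat.pow_le_pow_right (by omega) h))

lemma mod_id1 {p a b : ℕ} (ha : a < p) (hb : b < p) :
    ((a + (p - b)) % p + b) % p = a := by
  rw [Nat.mod_add_mod, add_assoc, Nat.sub_add_cancel (le_of_lt hb), Nat.add_mod_right,
    Nat.mod_eq_of_lt ha]

lemma mod_id2 {p a b : ℕ} (ha : a < p) (hb : b < p) :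
    ((a + b) % p + (p - b)) % p = a := by
  rw [Nat.mod_add_mod, add_assoc, Nat.add_sub_cancel' (le_of_lt hb), Nat.add_mod_right,
    Nat.mod_eq_of_lt ha]

lemma dadd_lt_base {p : ℕ} (hp : 2 ≤ p) (k l : ℕ) : dadd p k l < p ^ (k + l + 1) :=
  sum_digits_lt hp (fun _ _ => Nat.mod_lt _ (by omega))

lemma dsub_lt_base {p : ℕ} (hp : 2 ≤ p) (k l : ℕ) : dsub p k l < p ^ (k + l + 1) :=
  sum_digits_lt hp (fun _ _ => Nat.mod_lt _ (by omega))

lemma dadd_digit {p : ℕ} (hp : 2 ≤ p) (k l i : ℕ) :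
    ndigit p (dadd p k l) i = (ndigit p k i + ndigit p l i) % p := by
  by_cases hi : i < k + l + 1
  · exact digit_of_sum hp hi (fun _ _ => Nat.mod_lt _ (by omega))
  · rw [ndigit_eq_zero_of_lt (lt_of_lt_of_le (dadd_lt_base hp k l)
      (Nat.pow_le_pow_right (by omega) (by omega))),
      ndigit_eq_zero_of_lt (lt_pow_self' hp (show k ≤ i by omega)),
      ndigit_eq_zero_of_lt (lt_pow_self' hp (show l ≤ i by omega))]
    simp

lemma dsub_digit {p : ℕ} (hp : 2 ≤ p) (k l i : ℕ) :
    ndigit p (dsub p k l) i = (ndigit p k i + (p - ndigit p l i)) % p := by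
  by_cases hi : i < k + l + 1
  · exact digit_of_sum hp hi (fun _ _ => Nat.mod_lt _ (by omega))
  · rw [ndigit_eq_zero_of_lt (lt_of_lt_of_le (dsub_lt_base hp k l)
      (Nat.pow_le_pow_right (by omega) (by omega))),
      ndigit_eq_zero_of_lt (lt_pow_self' hp (show k ≤ i by omega)),
      ndigit_eq_zero_of_lt (lt_pow_self' hp (show l ≤ i by omega))]
    simp [Nat.sub_zero, Nat.mod_self]

lemma lt_pow_of_digits_zero {p : ℕ} (hp : 2 ≤ p) {n M m : ℕ} (hn : n < p ^ M)
    (h : ∀ i, m ≤ i → ndigit p n i = 0) : n < p ^ m := by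
  rcases le_or_gt M m with hMm | hMm
  · exact lt_of_lt_of_le hn (Nat.pow_le_pow_right (by omega) hMm)
  · rw [← digits_reconstruct hn]
    rw [← Finset.sum_subset (Finset.range_subset_range.mpr (le_of_lt hMm))
      (fun i _ hi => by rw [h i (by simpa using hi)]; ring)]
    exact sum_digits_lt hp (fun i _ => ndigit_lt hp n i)

lemma dadd_lt {p m k l : ℕ} (hp : 2 ≤ p) (hk : k < p ^ m) (hl : l < p ^ m) :
    dadd p k l < p ^ m := by
  refine lt_pow_of_digits_zero hp (dadd_lt_base hp k l) (fun i hi => ?_)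
  rw [dadd_digit hp,
    ndigit_eq_zero_of_lt (lt_of_lt_of_le hk (Nat.pow_le_pow_right (by omega) hi)),
    ndigit_eq_zero_of_lt (lt_of_lt_of_le hl (Nat.pow_le_pow_right (by omega) hi))]
  simp

lemma dsub_lt {p m k l : ℕ} (hp : 2 ≤ p) (hk : k < p ^ m) (hl : l < p ^ m) :
    dsub p k l < p ^ m := by
  refine lt_pow_of_digits_zero hp (dsub_lt_base hp k l) (fun i hi => ?_)
  rw [dsub_digit hp,
    ndigit_eq_zero_of_lt (lt_of_lt_of_le hk (Nat.pow_le_pow_right (by omega) hi)),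
    ndigit_eq_zero_of_lt (lt_of_lt_of_le hl (Nat.pow_le_pow_right (by omega) hi))]
  simp [Nat.mod_self]

lemma dadd_dsub {p n v : ℕ} (hp : 2 ≤ p) : dadd p (dsub p n v) v = n := by
  refine eq_of_digits (M := dadd p (dsub p n v) v + n + 1)
    (lt_pow_self' hp (by omega)) (lt_pow_self' hp (by omega)) (fun i _ => ?_)
  rw [dadd_digit hp, dsub_digit hp, mod_id1 (ndigit_lt hp n i) (ndigit_lt hp v i)]

lemma dsub_dadd {p w v : ℕ} (hp : 2 ≤ p) : dsub p (dadd p w v) v = w := by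
  refine eq_of_digits (M := dsub p (dadd p w v) v + w + 1)
    (lt_pow_self' hp (by omega)) (lt_pow_self' hp (by omega)) (fun i _ => ?_)
  rw [dsub_digit hp, dadd_digit hp, mod_id2 (ndigit_lt hp w i) (ndigit_lt hp v i)]

lemma nvec_dadd {p m : ℕ} (hp : 2 ≤ p) (w v : ℕ) :
    nvec p m (dadd p w v) = nvec p m w + nvec p m v := by
  haveI : NeZero p := ⟨by omega⟩
  funext i
  simp only [nvec, Pi.add_apply, dadd_digit hp]
  push_cast [ZMod.natCast_mod]
  rfl


noncomputable def chr (p : ℕ) (z : ZMod p) : ℂ := omega p ^ z.val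

lemma omega_prim {p : ℕ} (hp : p ≠ 0) : IsPrimitiveRoot (omega p) p :=
  Complex.isPrimitiveRoot_exp p hp

lemma omega_pow_p {p : ℕ} (hp : p ≠ 0) : omega p ^ p = 1 := (omega_prim hp).pow_eq_one

lemma omega_pow_mod {p : ℕ} (hp : p ≠ 0) (a : ℕ) : omega p ^ a = omega p ^ (a % p) := by
  conv_lhs => rw [← Nat.div_add_mod a p]
  rw [pow_add, pow_mul, omega_pow_p hp, one_pow, one_mul]

lemma chr_natCast {p : ℕ} (hp : 2 ≤ p) (a : ℕ) : chr p (a : ZMod p) = omega p ^ a := by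
  haveI : NeZero p := ⟨by omega⟩
  rw [chr, ZMod.val_natCast, ← omega_pow_mod (by omega)]

lemma chr_zero {p : ℕ} (hp : 2 ≤ p) : chr p 0 = 1 := by
  haveI : NeZero p := ⟨by omega⟩
  simp [chr]

lemma chr_add {p : ℕ} (hp : 2 ≤ p) (a b : ZMod p) : chr p (a + b) = chr p a * chr p b := by
  haveI : NeZero p := ⟨by omega⟩
  have h : ((a.val + b.val : ℕ) : ZMod p) = a + b := by
    push_cast
    simp [ZMod.natCast_val, ZMod.cast_id]
  rw [← h, chr_natCast hp, pow_add]
  rfl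

lemma chr_sum {p : ℕ} (hp : 2 ≤ p) {ι : Type*} (s : Finset ι) (f : ι → ZMod p) :
    chr p (∑ x ∈ s, f x) = ∏ x ∈ s, chr p (f x) := by
  induction s using Finset.cons_induction with
  | empty => simp [chr_zero hp]
  | cons a s ha ih => rw [Finset.sum_cons, Finset.prod_cons, chr_add hp, ih]

lemma abs_omega {p : ℕ} (hp : 2 ≤ p) : ‖omega p‖ = 1 := by
  rw [omega, Complex.norm_exp]
  convert Real.exp_zero using 2
  simp [Complex.div_re, Complex.I_re, Complex.I_im]

lemma chr_conj {p : ℕ} (hp : 2 ≤ p) (z : ZMod p) :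
    (starRingEnd ℂ) (chr p z) = chr p (-z) := by
  have h1 : chr p z * chr p (-z) = 1 := by
    rw [← chr_add hp]
    simp [chr_zero hp]
  have h2 : ‖chr p z‖ = 1 := by
    rw [chr, norm_pow, abs_omega hp, one_pow]
  rw [← Complex.inv_eq_conj h2]
  exact ((eq_inv_of_mul_eq_one_right h1).symm)

lemma sum_zmod_chr {p : ℕ} [Fact p.Prime] : ∑ d : ZMod p, chr p d = 0 := by
  have hp : 2 ≤ p := (Fact.out : p.Prime).two_le
  haveI : NeZero p := ⟨by omega⟩
  have h : ∑ d : ZMod p, chr p d = ∑ i ∈ range p, omega p ^ i := by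
    refine Finset.sum_nbij' (fun d => d.val) (fun i => (i : ZMod p)) ?_ ?_ ?_ ?_ ?_
    · intro a _; exact Finset.mem_range.mpr (ZMod.val_lt a)
    · intro a _; exact Finset.mem_univ _
    · intro a _; simp [ZMod.natCast_val, ZMod.cast_id]
    · intro a ha; exact ZMod.val_cast_of_lt (Finset.mem_range.mp ha)
    · intro a _; rfl
  rw [h]
  exact (omega_prim (by omega)).geom_sum_eq_zero (by omega)

lemma sum_zmod_chr_mul {p : ℕ} [Fact p.Prime] (c : ZMod p) :
    ∑ d : ZMod p, chr p (c * d) = if c = 0 then (p : ℂ) else 0 := by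
  have hp : 2 ≤ p := (Fact.out : p.Prime).two_le
  haveI : NeZero p := ⟨by omega⟩
  by_cases hc : c = 0
  · simp [hc, chr_zero hp, Finset.card_univ, ZMod.card]
  · rw [if_neg hc]
    have he : ∑ d : ZMod p, chr p (c * d) = ∑ d : ZMod p, chr p d :=
      Fintype.sum_equiv (Equiv.mulLeft₀ c hc) _ _ (fun d => rfl)
    rw [he, sum_zmod_chr]


lemma xdigit_ratio_le {p : ℕ} (hp : 2 ≤ p) {N l m : ℕ} (h1 : 1 ≤ l) (hlm : l ≤ m) :
    xdigit p ((N : ℝ) / (p : ℝ) ^ m) l = ndigit p N (m - l) := by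
  unfold xdigit ndigit
  have hp0 : (0:ℝ) < (p:ℝ) := by positivity
  have key : (p:ℝ) ^ l * ((N:ℝ) / (p:ℝ) ^ m) = (N:ℝ) / (p:ℝ) ^ (m - l) := by
    have hm : m = l + (m - l) := by omega
    rw [hm, pow_add]
    field_simp
    rw [Nat.add_sub_cancel_left]
  rw [key, Int.floor_toNat,
    show ((p:ℝ) ^ (m - l)) = ((p ^ (m - l) : ℕ) : ℝ) by push_cast; ring,
    Nat.floor_div_natCast, Nat.floor_natCast]

lemma xdigit_ratio_gt {p : ℕ} (hp : 2 ≤ p) {N l m : ℕ} (hlm : m < l) :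
    xdigit p ((N : ℝ) / (p : ℝ) ^ m) l = 0 := by
  unfold xdigit
  have hp0 : (0:ℝ) < (p:ℝ) := by positivity
  have key : (p:ℝ) ^ l * ((N:ℝ) / (p:ℝ) ^ m) = ((N * p ^ (l - m) : ℕ) : ℝ) := by
    have hm : l = m + (l - m) := by omega
    push_cast
    rw [hm, pow_add]
    field_simp
    rw [Nat.add_sub_cancel_left]
    ring
  rw [key, Int.floor_natCast, Int.toNat_natCast, Nat.mul_mod,
    Nat.pow_mod, Nat.mod_self, zero_pow (by omega), Nat.zero_mod, mul_zero, Nat.zero_mod]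

lemma sum_div_eq {p : ℕ} (hp : 2 ≤ p) (m : ℕ) (y : ℕ → ℕ) :
    ∑ i ∈ range m, (y i : ℝ) / (p:ℝ) ^ (i + 1)
      = ((∑ d ∈ range m, y (m - 1 - d) * p ^ d : ℕ) : ℝ) / (p:ℝ) ^ m := by
  have hp0 : (0:ℝ) < (p:ℝ) := by positivity
  push_cast
  rw [Finset.sum_div, ← Finset.sum_range_reflect (fun d => ((y (m-1-d) : ℝ) * (p:ℝ) ^ d) / (p:ℝ) ^ m) m]
  apply Finset.sum_congr rfl
  intro j hj
  have hjm : j < m := Finset.mem_range.mp hj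
  have h1 : m - 1 - (m - 1 - j) = j := by omega
  simp only [h1]
  rw [div_eq_div_iff (by positivity) (by positivity)]
  have h2 : (m - 1 - j) + (j + 1) = m := by omega
  calc (y j : ℝ) * (p:ℝ) ^ m = (y j : ℝ) * ((p:ℝ) ^ (m - 1 - j) * (p:ℝ) ^ (j+1)) := by
        rw [← pow_add, h2]
    _ = (y j : ℝ) * (p:ℝ) ^ (m - 1 - j) * (p:ℝ) ^ (j + 1) := by ring

lemma xdigit_netPoint {p s m : ℕ} (hp : 2 ≤ p) (C : Fin s → Matrix (Fin m) (Fin m) (ZMod p))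
    (n : ℕ) (j : Fin s) (i : ℕ) :
    xdigit p (netPoint p s m C n j) (i + 1)
      = if h : i < m then ((C j).mulVec (nvec p m n) ⟨i, h⟩).val else 0 := by
  haveI : NeZero p := ⟨by omega⟩
  set Y : ℕ → ℕ := fun t => if h : t < m then ((C j).mulVec (nvec p m n) ⟨t, h⟩).val else 0 with hY
  have hYlt : ∀ t, Y t < p := by
    intro t
    rw [hY]
    dsimp only
    by_cases h : t < m
    · rw [dif_pos h]; exact ZMod.val_lt _
    · rw [dif_neg h]; omega
  have h0 : netPoint p s m C n j = ((∑ d ∈ range m, Y (m - 1 - d) * p ^ d : ℕ) : ℝ) / (p:ℝ) ^ m := by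
    rw [netPoint, ← sum_div_eq hp m Y, ← Fin.sum_univ_eq_sum_range (fun t => (Y t : ℝ)/(p:ℝ) ^ (t+1)) m]
    apply Finset.sum_congr rfl
    intro i _
    simp only [hY, i.isLt, dif_pos, Fin.eta]
  rw [h0]
  by_cases him : i < m
  · rw [dif_pos him, xdigit_ratio_le hp (by omega) (by omega),
      digit_of_sum hp (show m - (i+1) < m by omega) (fun t _ => hYlt _)]
    have h3 : m - 1 - (m - (i+1)) = i := by omega
    rw [h3, hY]
    simp only [dif_pos him]
  · rw [dif_neg him, xdigit_ratio_gt hp (by omega)]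


lemma wal_netPoint {p s m : ℕ} (hp : 2 ≤ p) (C : Fin s → Matrix (Fin m) (Fin m) (ZMod p))
    (n : ℕ) (j : Fin s) (kj : ℕ) :
    wal p kj (netPoint p s m C n j)
      = chr p (∑ i : Fin m, (C j).mulVec (nvec p m n) i * nvec p m kj i) := by
  haveI : NeZero p := ⟨by omega⟩
  rw [wal, ← chr_natCast hp]
  congr 1
  set x := netPoint p s m C n j with hx
  set M := max (kj + 1) m with hM
  have e1 : ∑ i ∈ range (kj+1), xdigit p x (i+1) * ndigit p kj i
          = ∑ i ∈ range M, xdigit p x (i+1) * ndigit p kj i := by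
    apply Finset.sum_subset (Finset.range_subset_range.mpr (le_max_left _ _))
    intro i _ hi
    have hik : kj + 1 ≤ i := le_of_not_gt (fun h => hi (Finset.mem_range.mpr h))
    rw [ndigit_eq_zero_of_lt (lt_pow_self' hp (show kj ≤ i by omega)), mul_zero]
  have e2 : ∑ i ∈ range m, xdigit p x (i+1) * ndigit p kj i
          = ∑ i ∈ range M, xdigit p x (i+1) * ndigit p kj i := by
    apply Finset.sum_subset (Finset.range_subset_range.mpr (le_max_right _ _))
    intro i _ hi
    have him : ¬ i < m := fun h => hi (Finset.mem_range.mpr h)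
    rw [hx, xdigit_netPoint hp, dif_neg him, zero_mul]
  rw [e1, ← e2]
  push_cast
  rw [← Fin.sum_univ_eq_sum_range
    (fun i => ((xdigit p x (i+1) : ZMod p) * (ndigit p kj i : ZMod p))) m]
  apply Finset.sum_congr rfl
  intro i _
  rw [hx, xdigit_netPoint hp, dif_pos i.isLt]
  simp [nvec, ZMod.natCast_val, ZMod.cast_id]

lemma walS_netPoint {p s m : ℕ} (hp : 2 ≤ p) (C : Fin s → Matrix (Fin m) (Fin m) (ZMod p))
    (k : Fin s → ℕ) (n : ℕ) :
    walS p s k (netPoint p s m C n)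
      = chr p (∑ i, Cdot p s m C k i * nvec p m n i) := by
  rw [walS, Finset.prod_congr rfl (fun j _ => wal_netPoint hp C n j (k j)), ← chr_sum hp]
  congr 1
  have step : ∀ j : Fin s, (∑ i : Fin m, Matrix.mulVec (C j) (nvec p m n) i * nvec p m (k j) i)
      = ∑ i : Fin m, Matrix.mulVec (Matrix.transpose (C j)) (nvec p m (k j)) i * nvec p m n i := by
    intro j
    have h1 : (∑ i : Fin m, Matrix.mulVec (C j) (nvec p m n) i * nvec p m (k j) i)
        = dotProduct (nvec p m (k j)) (Matrix.mulVec (C j) (nvec p m n)) := by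
      rw [dotProduct_comm]; rfl
    rw [h1, Matrix.dotProduct_mulVec, ← Matrix.mulVec_transpose]
    rfl
  rw [Finset.sum_congr rfl (fun j _ => step j), Finset.sum_comm]
  unfold Cdot
  apply Finset.sum_congr rfl
  intro i _
  rw [Finset.sum_apply, Finset.sum_mul]

lemma charSumM {p m : ℕ} [Fact p.Prime] (h : Fin m → ZMod p) :
    ∑ v ∈ range (p ^ m), chr p (∑ i, h i * nvec p m v i)
      = if h = 0 then (p:ℂ)^m else 0 := by
  have hp : 2 ≤ p := (Fact.out : p.Prime).two_le
  haveI : NeZero p := ⟨by omega⟩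
  have hbij : ∑ v ∈ range (p^m), chr p (∑ i, h i * nvec p m v i)
      = ∑ y : Fin m → ZMod p, chr p (∑ i, h i * y i) := by
    refine Finset.sum_nbij' (fun v => nvec p m v)
      (fun y => ∑ t ∈ range m, (if ht : t < m then (y ⟨t, ht⟩).val else 0) * p ^ t)
      ?_ ?_ ?_ ?_ ?_
    · intro v _; exact Finset.mem_univ _
    · intro y _
      apply Finset.mem_range.mpr
      apply sum_digits_lt hp
      intro t ht
      rw [dif_pos ht]
      exact ZMod.val_lt _
    · intro v hv
      have hvm : v < p ^ m := Finset.mem_range.mp hv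
      have : ∀ t ∈ range m, (if ht : t < m then ((nvec p m v) ⟨t, ht⟩).val else 0) * p ^ t
          = ndigit p v t * p ^ t := by
        intro t ht
        rw [dif_pos (Finset.mem_range.mp ht)]
        congr 1
        exact ZMod.val_cast_of_lt (ndigit_lt hp v t)
      rw [Finset.sum_congr rfl this, digits_reconstruct hvm]
    · intro y _
      funext i
      have hd : ndigit p (∑ t ∈ range m, (if ht : t < m then (y ⟨t, ht⟩).val else 0) * p ^ t) i
          = (y i).val := by
        rw [digit_of_sum hp i.isLt (fun t ht => by
          rw [dif_pos ht]; exact ZMod.val_lt _), dif_pos i.isLt]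
      simp only [nvec]
      rw [hd]
      simp [ZMod.natCast_val, ZMod.cast_id]
    · intro v _; rfl
  rw [hbij, Finset.sum_congr rfl (fun y _ => chr_sum hp Finset.univ (fun i => h i * y i)),
    ← Fintype.piFinset_univ,
    ← Finset.prod_univ_sum (fun _ : Fin m => (Finset.univ : Finset (ZMod p)))
      (fun i d => chr p (h i * d)),
    Finset.prod_congr rfl (fun i _ => sum_zmod_chr_mul (h i))]
  by_cases h0 : h = 0
  · simp [h0]
  · rw [if_neg h0]
    obtain ⟨i, hi⟩ := Function.ne_iff.mp h0
    exact Finset.prod_eq_zero (Finset.mem_univ i) (by rw [if_neg (by simpa using hi)])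


/-- double sum of a convolution kernel over the digital net against Walsh
functions indexed by representatives `k, l ∈ K`. -/
theorem statement19 (p s m : ℕ) [Fact p.Prime] (hs : 1 ≤ s) (hm : 1 ≤ m)
    (C : Fin s → Matrix (Fin m) (Fin m) (ZMod p))
    (K : Finset (Fin s → ℕ))
    (hK : ∀ h : Fin m → ZMod p, ∃! k, k ∈ K ∧ Cdot p s m C k = h)
    (F : ℕ → ℂ) (k l : Fin s → ℕ) (hk : k ∈ K) (hl : l ∈ K) :
    ∑ n ∈ Finset.range (p ^ m), ∑ v ∈ Finset.range (p ^ m),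
        F (dsub p n v) * walS p s k (netPoint p s m C n) *
          (starRingEnd ℂ) (walS p s l (netPoint p s m C v)) =
      if k = l then
        (p : ℂ) ^ (2 * m) * (((p : ℂ) ^ m)⁻¹ *
          ∑ n ∈ Finset.range (p ^ m), F n * walS p s k (netPoint p s m C n))
      else 0 := by
  have hp : 2 ≤ p := (Fact.out : p.Prime).two_le
  haveI : NeZero p := ⟨by omega⟩
  have hpC : (p:ℂ) ≠ 0 := Nat.cast_ne_zero.mpr (by omega)
  set A := Cdot p s m C k with hA
  set B := Cdot p s m C l with hB
  set S := ∑ w ∈ Finset.range (p ^ m), F w * chr p (∑ i, A i * nvec p m w i) with hS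
  have hterm : ∀ n v : ℕ,
      F (dsub p n v) * walS p s k (netPoint p s m C n) *
        (starRingEnd ℂ) (walS p s l (netPoint p s m C v))
      = F (dsub p n v) * chr p (∑ i, A i * nvec p m n i)
          * chr p (-(∑ i, B i * nvec p m v i)) := by
    intro n v
    rw [hA, hB, walS_netPoint hp, walS_netPoint hp, chr_conj hp]
  rw [Finset.sum_congr rfl (fun n _ => Finset.sum_congr rfl (fun v _ => hterm n v)),
    Finset.sum_comm]
  have hswap : ∀ v ∈ Finset.range (p ^ m), (∑ n ∈ Finset.range (p ^ m),
      F (dsub p n v) * chr p (∑ i, A i * nvec p m n i)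
        * chr p (-(∑ i, B i * nvec p m v i)))
      = S * chr p (∑ i, (A - B) i * nvec p m v i) := by
    intro v hv
    have hvm : v < p ^ m := Finset.mem_range.mp hv
    have hinner : (∑ n ∈ Finset.range (p ^ m),
        F (dsub p n v) * chr p (∑ i, A i * nvec p m n i)
          * chr p (-(∑ i, B i * nvec p m v i)))
        = ∑ w ∈ Finset.range (p ^ m),
            F w * chr p (∑ i, A i * nvec p m w i)
              * chr p ((∑ i, A i * nvec p m v i) + -(∑ i, B i * nvec p m v i)) := by
      refine Finset.sum_nbij' (fun n => dsub p n v) (fun w => dadd p w v) ?_ ?_ ?_ ?_ ?_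
      · intro n hn
        exact Finset.mem_range.mpr (dsub_lt hp (Finset.mem_range.mp hn) hvm)
      · intro w hw
        exact Finset.mem_range.mpr (dadd_lt hp (Finset.mem_range.mp hw) hvm)
      · intro n _; exact dadd_dsub hp
      · intro w _; exact dsub_dadd hp
      · intro n _
        have e : nvec p m n = nvec p m (dsub p n v) + nvec p m v := by
          conv_lhs => rw [← dadd_dsub (p := p) (n := n) (v := v) hp]
          exact nvec_dadd hp _ _
        rw [e]
        have e2 : (∑ i, A i * (nvec p m (dsub p n v) + nvec p m v) i)
            = (∑ i, A i * nvec p m (dsub p n v) i) + ∑ i, A i * nvec p m v i := by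
          rw [← Finset.sum_add_distrib]
          apply Finset.sum_congr rfl
          intro i _
          simp [mul_add]
        rw [e2, chr_add hp, chr_add hp]
        ring
    rw [hinner, ← Finset.sum_mul]
    congr 2
    rw [← sub_eq_add_neg, ← Finset.sum_sub_distrib]
    apply Finset.sum_congr rfl
    intro i _
    simp [sub_mul]
  rw [Finset.sum_congr rfl hswap, ← Finset.mul_sum, charSumM (A - B)]
  have hR : ∑ n ∈ Finset.range (p ^ m), F n * walS p s k (netPoint p s m C n) = S := by
    rw [hS]
    exact Finset.sum_congr rfl (fun n _ => by rw [walS_netPoint hp, hA])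
  by_cases hkl : k = l
  · have hAB : A - B = 0 := by rw [hA, hB, hkl, sub_self]
    rw [if_pos hAB, if_pos hkl, hR, two_mul, pow_add]
    field_simp
  · have hne : A - B ≠ 0 := by
      intro h0
      apply hkl
      have hABeq : Cdot p s m C k = Cdot p s m C l := by
        rw [← hA, ← hB]
        exact sub_eq_zero.mp h0
      obtain ⟨x, _, hx⟩ := hK (Cdot p s m C l)
      exact (hx k ⟨hk, hABeq⟩).trans (hx l ⟨hl, rfl⟩).symm
    rw [if_neg hne, if_neg hkl, mul_zero]
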